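/- Let K = (G, M, I) be a finite formal context and H ⊆ G with |H| = n ≥ 2. If there exists a bijective local full scale-measure σ : H → [n] from K into the interordinal scale I_n, then for every H' ⊆ H with |H'| = k ≥ 2 there exists a bijective local full scale-measure from K (with domain H') into the interordinal scale I_k. -/

import Mathlib

/-- The intent (common attributes) of a set of objects. -/
def intentOf {G M : Type*} (Inc : G → M → Prop) (A : Set G) : Set M :=
  {m | ∀ g ∈ A, Inc g m}

/-- The extent (common objects) of a set of attributes. -/
def extentOf {G M : Type*} (Inc : G → M → Prop) (B : Set M) : Set G :=
  {g | ∀ m ∈ B, Inc g m}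

/-- The set of extents of the formal context `(G, M, Inc)`. -/
def Extents {G M : Type*} (Inc : G → M → Prop) : Set (Set G) :=
  {A | extentOf Inc (intentOf Inc A) = A}

/-- The object closure operator `φ` of a formal context: `φ(A) = A''`. -/
def closureK {G M : Type*} (Inc : G → M → Prop) (A : Set G) : Set G :=
  extentOf Inc (intentOf Inc A)

/-- `σ` is a scale-measure from `(G,M,Inc)` into `(GS,MS,IncS)`. -/
def IsScaleMeasure {G M GS MS : Type*} (Inc : G → M → Prop) (IncS : GS → MS → Prop)
    (σ : G → GS) : Prop :=
  ∀ A ∈ Extents IncS, σ ⁻¹' A ∈ Extents Inc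

/-- `σ` is a full scale-measure from `(G,M,Inc)` into `(GS,MS,IncS)`. -/
def IsFullScaleMeasure {G M GS MS : Type*} (Inc : G → M → Prop) (IncS : GS → MS → Prop)
    (σ : G → GS) : Prop :=
  IsScaleMeasure Inc IncS σ ∧ Extents Inc = (fun A => σ ⁻¹' A) '' Extents IncS

/-- The incidence of the induced subcontext `K[H, M]`. -/
def subInc {G M : Type*} (Inc : G → M → Prop) (H : Set G) : ↥H → M → Prop :=
  fun h m => Inc h.1 m

/-- `σ : H → GS` is a local full scale-measure from `K` into `S`, i.e. a full
scale-measure from `K[H,M]` into `S`. -/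
def IsLocalFullScaleMeasure {G M GS MS : Type*} (Inc : G → M → Prop) (H : Set G)
    (IncS : GS → MS → Prop) (σ : ↥H → GS) : Prop :=
  IsFullScaleMeasure (subInc Inc H) IncS σ

/-- Nominal scale `N_n = ([n],[n],=)` (objects/attributes modelled by `Fin n`). -/
def nominalInc (n : ℕ) : Fin n → Fin n → Prop := fun a b => a = b

/-- Contranominal scale `B_n = ([n],[n],≠)`. -/
def contranominalInc (n : ℕ) : Fin n → Fin n → Prop := fun a b => a ≠ b

/-- Ordinal scale `O_n = ([n],[n],≤)`. -/
def ordinalInc (n : ℕ) : Fin n → Fin n → Prop := fun a b => a ≤ b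

/-- Interordinal scale `I_n = ([n],[n],≤) | ([n],[n],≥)`. -/
def interordinalInc (n : ℕ) : Fin n → Fin n ⊕ Fin n → Prop :=
  fun g m => Sum.elim (fun a => g ≤ a) (fun a => a ≤ g) m

/-- Crown scale `C_n = ([n],[n],J)` with `(a,b) ∈ J` iff `a = b`, `b = a+1`, or
`(a,b) = (n,1)` (here `Fin n` is `0`-indexed, so `(n,1)` becomes `(n-1,0)`). -/
def crownInc (n : ℕ) : Fin n → Fin n → Prop :=
  fun a b => a = b ∨ (b : ℕ) = (a : ℕ) + 1 ∨ ((a : ℕ) = n - 1 ∧ (b : ℕ) = 0)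

set_option linter.unusedVariables false

section Galois
variable {G M : Type*} (Inc : G → M → Prop)

lemma subset_closureK (A : Set G) : A ⊆ closureK Inc A :=
  fun g hg m hm => hm g hg

lemma intent_anti {A B : Set G} (h : A ⊆ B) : intentOf Inc B ⊆ intentOf Inc A :=
  fun m hm g hg => hm g (h hg)

lemma extent_anti {A B : Set M} (h : A ⊆ B) : extentOf Inc B ⊆ extentOf Inc A :=
  fun g hg m hm => hg m (h hm)

lemma subset_intent_extent (B : Set M) : B ⊆ intentOf Inc (extentOf Inc B) :=
  fun m hm g hg => hg m hm

lemma closure_mem_Extents (A : Set G) : closureK Inc A ∈ Extents Inc :=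
  Set.Subset.antisymm (extent_anti Inc (subset_intent_extent Inc (intentOf Inc A)))
    (subset_closureK Inc _)
end Galois

lemma interordinal_extents {n : ℕ} (hn : 2 ≤ n) :
    Extents (interordinalInc n) = {S | ∃ a b : Fin n, S = Set.Icc a b} := by
  ext S
  constructor
  · intro hS
    rcases Set.eq_empty_or_nonempty S with he | hne
    · refine ⟨⟨1, by omega⟩, ⟨0, by omega⟩, ?_⟩
      rw [he, Set.Icc_eq_empty]
      simp [Fin.le_def]
    · obtain ⟨a, haS, ha⟩ := Set.exists_min_image S id S.toFinite hne
      obtain ⟨b, hbS, hb⟩ := Set.exists_max_image S id S.toFinite hne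
      refine ⟨a, b, Set.Subset.antisymm (fun x hx => ⟨ha x hx, hb x hx⟩) ?_⟩
      intro g hg
      rw [← hS]
      intro m hm
      cases m with
      | inl c => exact le_trans hg.2 (hm b hbS)
      | inr c => exact le_trans (hm a haS) hg.1
  · rintro ⟨a, b, rfl⟩
    refine Set.Subset.antisymm ?_ (subset_closureK _ _)
    intro g hg
    by_cases hab : a ≤ b
    · exact ⟨hg (Sum.inr a) (fun x hx => hx.1), hg (Sum.inl b) (fun x hx => hx.2)⟩
    · exfalso
      have h1 : g ≤ (⟨0, by omega⟩ : Fin n) :=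
        hg (Sum.inl ⟨0, by omega⟩) (fun x hx => absurd (le_trans hx.1 hx.2) hab)
      have h2 : (⟨1, by omega⟩ : Fin n) ≤ g :=
        hg (Sum.inr ⟨1, by omega⟩) (fun x hx => absurd (le_trans hx.1 hx.2) hab)
      simp only [Fin.le_def, Fin.val_mk] at h1 h2
      omega

lemma restrict_extents {G M : Type*} (Inc : G → M → Prop) {H H' : Set G} (hsub : H' ⊆ H) :
    Extents (subInc Inc H') =
      (fun B => (fun x : ↥H' => (⟨x.1, hsub x.2⟩ : ↥H)) ⁻¹' B) '' Extents (subInc Inc H) := by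
  set ι : ↥H' → ↥H := fun x => ⟨x.1, hsub x.2⟩ with hι
  have hint : ∀ A : Set ↥H', intentOf (subInc Inc H) (ι '' A) = intentOf (subInc Inc H') A := by
    intro A
    ext m
    constructor
    · intro hm x hx
      exact hm (ι x) ⟨x, hx, rfl⟩
    · rintro hm y ⟨x, hx, rfl⟩
      exact hm x hx
  have hext : ∀ B : Set M, ι ⁻¹' (extentOf (subInc Inc H) B) = extentOf (subInc Inc H') B := by
    intro B; rfl
  ext A
  constructor
  · intro hA
    refine ⟨closureK (subInc Inc H) (ι '' A), closure_mem_Extents _ _, ?_⟩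
    show ι ⁻¹' (extentOf _ (intentOf _ (ι '' A))) = A
    rw [hext, hint]
    exact hA
  · rintro ⟨B, hB, rfl⟩
    show extentOf _ (intentOf _ (ι ⁻¹' B)) = ι ⁻¹' B
    refine Set.Subset.antisymm ?_ (subset_closureK _ _)
    have h1 : ι '' (ι ⁻¹' B) ⊆ B := Set.image_preimage_subset ι B
    have h2 : extentOf (subInc Inc H') (intentOf (subInc Inc H') (ι ⁻¹' B))
        ⊆ extentOf (subInc Inc H') (intentOf (subInc Inc H) B) := by
      rw [← hint]
      exact extent_anti _ (intent_anti _ h1)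
    refine h2.trans ?_
    rw [← hext, hB]

lemma preimage_Icc_aux {k n : ℕ} (hk : 2 ≤ k) (f : Fin k → Fin n) (hf : Monotone f)
    (a b : Fin n) : ∃ a' b' : Fin k, f ⁻¹' Set.Icc a b = Set.Icc a' b' := by
  rcases Set.eq_empty_or_nonempty (f ⁻¹' Set.Icc a b) with he | hne
  · refine ⟨⟨1, by omega⟩, ⟨0, by omega⟩, ?_⟩
    rw [he, Set.Icc_eq_empty]
    simp [Fin.le_def]
  · obtain ⟨a', ha'S, ha'⟩ := Set.exists_min_image _ id (Set.toFinite _) hne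
    obtain ⟨b', hb'S, hb'⟩ := Set.exists_max_image _ id (Set.toFinite _) hne
    refine ⟨a', b', Set.Subset.antisymm (fun x hx => ⟨ha' x hx, hb' x hx⟩) ?_⟩
    intro y hy
    exact ⟨le_trans ha'S.1 (hf hy.1), le_trans (hf hy.2) hb'S.2⟩


theorem stmt18_aux {G M : Type*} [Finite G] [Finite M] (Inc : G → M → Prop)
    (H : Set G) {n : ℕ} (hn : 2 ≤ n) (hcard : H.ncard = n)
    (σ : ↥H → Fin n) (hb : Function.Bijective σ)
    (h : IsFullScaleMeasure (subInc Inc H) (interordinalInc n) σ) :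
    ∀ H' ⊆ H, ∀ k : ℕ, 2 ≤ k → H'.ncard = k →
      ∃ τ : ↥H' → Fin k, Function.Bijective τ ∧
        IsFullScaleMeasure (subInc Inc H') (interordinalInc k) τ := by
  intro H' hsub k hk hkcard
  classical
  set ι : ↥H' → ↥H := fun x => ⟨x.1, hsub x.2⟩ with hιdef
  have hιinj : Function.Injective ι := fun a b hab => Subtype.ext (congrArg (fun y : ↥H => y.1) hab)
  have hσι : Function.Injective (fun x : ↥H' => σ (ι x)) := fun a b hab => hιinj (hb.1 hab)
  haveI : Fintype ↥H' := Fintype.ofFinite _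
  set s : Finset (Fin n) := Finset.univ.image (fun x : ↥H' => σ (ι x)) with hsdef
  have hscard : s.card = k := by
    rw [hsdef, Finset.card_image_of_injective _ hσι, Finset.card_univ,
      ← Nat.card_eq_fintype_card, Nat.card_coe_set_eq, hkcard]
  set e := s.orderIsoOfFin hscard with hedef
  have hmem : ∀ x : ↥H', σ (ι x) ∈ s := fun x => Finset.mem_image_of_mem _ (Finset.mem_univ x)
  set τ : ↥H' → Fin k := fun x => e.symm ⟨σ (ι x), hmem x⟩ with hτdef
  have hfτ : ∀ x, ((e (τ x) : Fin n)) = σ (ι x) := by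
    intro x
    show ((e (e.symm _) : Fin n)) = _
    rw [OrderIso.apply_symm_apply]
  have hle : ∀ i j : Fin k, (e i : Fin n) ≤ (e j : Fin n) ↔ i ≤ j := by
    intro i j
    rw [Subtype.coe_le_coe, e.le_iff_le]
  have hmono : Monotone (fun i : Fin k => (e i : Fin n)) := fun i j hij => (hle i j).2 hij
  have hτbij : Function.Bijective τ := by
    constructor
    · intro x y hxy
      apply hσι
      have h2 := congrArg (fun j => ((e j : Fin n))) hxy
      simpa [hfτ x, hfτ y] using h2
    · intro j
      have hj : (e j : Fin n) ∈ s := (e j).2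
      obtain ⟨x, -, hx⟩ := Finset.mem_image.mp hj
      refine ⟨x, ?_⟩
      rw [hτdef]
      show e.symm ⟨σ (ι x), hmem x⟩ = j
      rw [show (⟨σ (ι x), hmem x⟩ : ↥s) = e j from Subtype.ext hx, OrderIso.symm_apply_apply]
  have key : Extents (subInc Inc H') = (fun C => τ ⁻¹' C) '' Extents (interordinalInc k) := by
    rw [restrict_extents Inc hsub, h.2, interordinal_extents hn, interordinal_extents hk]
    ext A
    simp only [Set.mem_image, Set.mem_setOf_eq]
    constructor
    · rintro ⟨B, ⟨D, ⟨a, b, rfl⟩, rfl⟩, rfl⟩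
      obtain ⟨a', b', hC⟩ := preimage_Icc_aux hk (fun i => (e i : Fin n)) hmono a b
      refine ⟨(fun i : Fin k => (e i : Fin n)) ⁻¹' Set.Icc a b, ⟨a', b', hC⟩, ?_⟩
      ext x
      simp only [Set.mem_preimage, hfτ x]
      exact Iff.rfl
    · rintro ⟨C, ⟨a, b, rfl⟩, rfl⟩
      refine ⟨σ ⁻¹' Set.Icc ((e a : Fin n)) ((e b : Fin n)),
        ⟨Set.Icc ((e a : Fin n)) ((e b : Fin n)), ⟨_, _, rfl⟩, rfl⟩, ?_⟩
      ext x
      simp only [Set.mem_preimage, Set.mem_Icc]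
      rw [← hfτ x, hle, hle]
  refine ⟨τ, hτbij, ?_, key⟩
  intro C hC
  rw [key]
  exact ⟨C, hC, rfl⟩

/-- Heredity of local full scale-measures into interordinal scales. -/
theorem stmt18 {G M : Type*} [Finite G] [Finite M] (Inc : G → M → Prop)
    (H : Set G) {n : ℕ} (hn : 2 ≤ n) (hcard : H.ncard = n)
    (σ : ↥H → Fin n) (hb : Function.Bijective σ)
    (h : IsLocalFullScaleMeasure Inc H (interordinalInc n) σ) :
    ∀ H' ⊆ H, ∀ k : ℕ, 2 ≤ k → H'.ncard = k →
      ∃ τ : ↥H' → Fin k, Function.Bijective τ ∧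
        IsLocalFullScaleMeasure Inc H' (interordinalInc k) τ := by
  intro H' hs k hk hkc
  obtain ⟨τ, hτ, hfull⟩ := stmt18_aux Inc H hn hcard σ hb h H' hs k hk hkc
  exact ⟨τ, hτ, hfull⟩
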